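/- Occupation-time bound for the diagonal: for every c > 0, lim_{N→∞} sup_{𝐤 ∈ B_N} N^{1−c} u_N(𝐤) = 0. -/

import Mathlib

open Set

namespace BoundaryDriven

open scoped Classical

/-- The discrete Laplacian on `ℤ²`. -/
def lap2 (f : ℤ × ℤ → ℝ) (x : ℤ × ℤ) : ℝ :=
  f (x.1 + 1, x.2) + f (x.1 - 1, x.2) + f (x.1, x.2 + 1) + f (x.1, x.2 - 1) - 4 * f x

/-- The diagonal "gradient" `(∇₂f)(k,l) = f(k−1,l) + f(k,l+1) − 2f(k,l)`. -/
def ref2 (f : ℤ × ℤ → ℝ) (x : ℤ × ℤ) : ℝ :=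
  f (x.1 - 1, x.2) + f (x.1, x.2 + 1) - 2 * f x

/-- `n̂ = ⌊N^{3/4}⌋`. -/
noncomputable def nhat (N : ℕ) : ℤ := ⌊(N : ℝ) ^ ((3 : ℝ) / 4)⌋

/-- The bulk set `B_N = {(k,l) : p+1 < k < max(n̂, l−1), n̂ < l < N}`. -/
def memB (p N : ℕ) (x : ℤ × ℤ) : Prop :=
  (p : ℤ) + 1 < x.1 ∧ x.1 < max (nhat N) (x.2 - 1) ∧ nhat N < x.2 ∧ x.2 < (N : ℤ)

/-- The diagonal boundary `D_N = {(k,k+1) : n̂ ≤ k ≤ N−2}`. -/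
def memD (N : ℕ) (x : ℤ × ℤ) : Prop :=
  x.2 = x.1 + 1 ∧ nhat N ≤ x.1 ∧ x.1 ≤ (N : ℤ) - 2

/-- The vertical boundary `V_N = {(p+1,l) : n̂ < l < N}`. -/
def memV (p N : ℕ) (x : ℤ × ℤ) : Prop :=
  x.1 = (p : ℤ) + 1 ∧ nhat N < x.2 ∧ x.2 < (N : ℤ)

/-- The lower horizontal boundary `H_{l,N} = {(k,n̂) : p+1 ≤ k < n̂}`. -/
def memHl (p N : ℕ) (x : ℤ × ℤ) : Prop :=
  x.2 = nhat N ∧ (p : ℤ) + 1 ≤ x.1 ∧ x.1 < nhat N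

/-- The upper horizontal boundary `H_{u,N} = {(k,N) : p+1 ≤ k ≤ N−2}`. -/
def memHu (p N : ℕ) (x : ℤ × ℤ) : Prop :=
  x.2 = (N : ℤ) ∧ (p : ℤ) + 1 ≤ x.1 ∧ x.1 ≤ (N : ℤ) - 2

/-- The boundary `∂B_N = V_N ∪ H_{l,N} ∪ H_{u,N}`. -/
def memBd (p N : ℕ) (x : ℤ × ℤ) : Prop := memV p N x ∨ memHl p N x ∨ memHu p N x

/-- The extremities `D̃_{N,ε}` of the diagonal:
`{(k,k+1) ∈ D_N : k ≤ N^{1−ε/4} or k ≥ N − N^{1−ε/4}}`. -/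
def memDtil (N : ℕ) (ε : ℝ) (x : ℤ × ℤ) : Prop :=
  memD N x ∧ ((x.1 : ℝ) ≤ (N : ℝ) ^ (1 - ε / 4) ∨ (N : ℝ) - (N : ℝ) ^ (1 - ε / 4) ≤ (x.1 : ℝ))

lemma maxPrinciple (n : ℤ) (v : ℤ × ℤ → ℝ)
    (hint : ∀ x : ℤ × ℤ, max |x.1| |x.2| < n → 0 ≤ lap2 v x)
    (hbd : ∀ x : ℤ × ℤ, max |x.1| |x.2| = n → v x ≤ 0) :
    ∀ x : ℤ × ℤ, max |x.1| |x.2| ≤ n → v x ≤ 0 := by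
  by_contra hcon
  push_neg at hcon
  obtain ⟨x₀, hx₀box, hx₀⟩ := hcon
  set box : Finset (ℤ × ℤ) := Finset.Icc (-n) n ×ˢ Finset.Icc (-n) n with hbox
  have hmem : ∀ x : ℤ × ℤ, x ∈ box ↔ max |x.1| |x.2| ≤ n := by
    intro x
    simp only [hbox, Finset.mem_product, Finset.mem_Icc, max_le_iff, abs_le]

  have hne : box.Nonempty := ⟨x₀, (hmem x₀).2 hx₀box⟩
  obtain ⟨z₁, hz₁, hz₁max⟩ := box.exists_max_image v hne
  have hMpos : 0 < v z₁ := lt_of_lt_of_le hx₀ (hz₁max x₀ ((hmem x₀).2 hx₀box))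
  classical
  set T : Finset (ℤ × ℤ) := box.filter (fun x => v x = v z₁) with hT
  have hTne : T.Nonempty := ⟨z₁, by simp [hT, hz₁]⟩
  obtain ⟨z, hzT, hzmax⟩ := T.exists_max_image (fun x => x.1) hTne
  have hzbox : z ∈ box := Finset.mem_of_mem_filter _ hzT
  have hzM : v z = v z₁ := (Finset.mem_filter.mp hzT).2
  have hzbd : max |z.1| |z.2| ≤ n := (hmem z).1 hzbox
  have hzint : max |z.1| |z.2| < n := by
    rcases lt_or_eq_of_le hzbd with h | h
    · exact h
    · exfalso; have := hbd z h; rw [hzM] at this; linarith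
  have hz1 : |z.1| < n ∧ |z.2| < n := by
    constructor <;> [exact lt_of_le_of_lt (le_max_left _ _) hzint;
      exact lt_of_le_of_lt (le_max_right _ _) hzint]
  obtain ⟨ha1, ha2⟩ := hz1
  rw [abs_lt] at ha1 ha2
  have hnb : ∀ y : ℤ × ℤ, max |y.1| |y.2| ≤ n → v y ≤ v z₁ := fun y hy =>
    hz₁max y ((hmem y).2 hy)
  have hb1 : v (z.1 + 1, z.2) ≤ v z₁ := hnb _ (by simp [max_le_iff, abs_le]; omega)
  have hb2 : v (z.1 - 1, z.2) ≤ v z₁ := hnb _ (by simp [max_le_iff, abs_le]; omega)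
  have hb3 : v (z.1, z.2 + 1) ≤ v z₁ := hnb _ (by simp [max_le_iff, abs_le]; omega)
  have hb4 : v (z.1, z.2 - 1) ≤ v z₁ := hnb _ (by simp [max_le_iff, abs_le]; omega)
  have hlap := hint z hzint
  unfold lap2 at hlap
  have heq : v (z.1 + 1, z.2) = v z₁ := by rw [hzM] at hlap; linarith
  have hmemT : (z.1 + 1, z.2) ∈ T := by
    rw [hT, Finset.mem_filter]
    exact ⟨(hmem _).2 (by simp [max_le_iff, abs_le]; omega), heq⟩
  have := hzmax _ hmemT
  simp at this

lemma abs_tri (d : ℤ) (hd : d ≠ 0) : |d - 1| + |d + 1| = 2 * |d| := by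
  rcases lt_or_gt_of_ne hd with h|h
  · rw [abs_of_neg h, abs_of_neg (by omega : d - 1 < 0), abs_of_nonpos (by omega : d + 1 ≤ 0)]; ring
  · rw [abs_of_pos h, abs_of_nonneg (by omega : 0 ≤ d - 1), abs_of_pos (by omega : 0 < d + 1)]; ring

lemma lap2_tent (a b : ℝ) (y : ℤ × ℤ) :
    lap2 (fun z => a - b * ((|z.2 - z.1 - 1| : ℤ) : ℝ)) y
      = if y.2 = y.1 + 1 then -4 * b else 0 := by
  unfold lap2
  simp only
  rcases eq_or_ne y.2 (y.1 + 1) with h | h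
  · rw [if_pos h,
      show y.2 - (y.1 + 1) - 1 = -1 by omega,
      show y.2 - (y.1 - 1) - 1 = 1 by omega,
      show y.2 + 1 - y.1 - 1 = 1 by omega,
      show y.2 - 1 - y.1 - 1 = -1 by omega,
      show y.2 - y.1 - 1 = 0 by omega]
    norm_num
    ring
  · rw [if_neg h,
      show y.2 - (y.1 + 1) - 1 = (y.2 - y.1 - 1) - 1 by ring,
      show y.2 - (y.1 - 1) - 1 = (y.2 - y.1 - 1) + 1 by ring,
      show y.2 + 1 - y.1 - 1 = (y.2 - y.1 - 1) + 1 by ring,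
      show y.2 - 1 - y.1 - 1 = (y.2 - y.1 - 1) - 1 by ring]
    have key := abs_tri (y.2 - y.1 - 1) (by omega)
    have keyR : ((|y.2 - y.1 - 1 - 1| : ℤ) : ℝ) + ((|y.2 - y.1 - 1 + 1| : ℤ) : ℝ)
        = 2 * ((|y.2 - y.1 - 1| : ℤ) : ℝ) := by exact_mod_cast key
    linear_combination (-2 * b) * keyR

/-- occupation-time bound for the diagonal.  Here `U N 𝐤` is the
expected time spent in `D_N`, before exiting the box `{‖·‖ < 2N}`, by the rate-`N²`
planar random walk which is reflected across the diagonal `D̄ = {(k,k+1) : k ∈ ℤ}` with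
probability 1/2 (i.e. jumps at half rate on `D̄`); it is characterised as the solution
of the stated discrete Dirichlet problem. -/
theorem diagonal_occupation_time_bound
    (p : ℕ) (hp : 1 ≤ p) (c : ℝ) (hc : 0 < c)
    (U : ℕ → (ℤ × ℤ) → ℝ)
    (hU : ∀ N : ℕ, p + 2 < N →
      (∀ x : ℤ × ℤ, max |x.1| |x.2| = 2 * (N : ℤ) → U N x = 0) ∧
      (∀ x : ℤ × ℤ, max |x.1| |x.2| < 2 * (N : ℤ) → x.2 ≠ x.1 + 1 →
        (N : ℝ) ^ 2 * lap2 (U N) x = (if memD N x then (-1 : ℝ) else 0)) ∧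
      (∀ x : ℤ × ℤ, max |x.1| |x.2| < 2 * (N : ℤ) → x.2 = x.1 + 1 →
        ((N : ℝ) ^ 2 / 2) * lap2 (U N) x = (if memD N x then (-1 : ℝ) else 0))) :
    ∀ ε > (0 : ℝ), ∃ N₀ : ℕ, ∀ N ≥ N₀, ∀ x : ℤ × ℤ, memB p N x →
      |(N : ℝ) ^ ((1 : ℝ) - c) * U N x| ≤ ε := by
  intro ε hε
  have htend : Filter.Tendsto (fun N : ℕ => (N : ℝ) ^ c) Filter.atTop Filter.atTop :=
    (tendsto_rpow_atTop hc).comp tendsto_natCast_atTop_atTop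
  obtain ⟨N₁, hN₁⟩ := Filter.eventually_atTop.mp (htend.eventually_ge_atTop (3 / ε))
  refine ⟨max N₁ (p + 3), ?_⟩
  intro N hN x hxB
  have hNge1 : N₁ ≤ N := le_trans (le_max_left _ _) hN
  have hNge2 : p + 3 ≤ N := le_trans (le_max_right _ _) hN
  have hNp : p + 2 < N := by omega
  obtain ⟨hzero, hoff, hdiag⟩ := hU N hNp
  have hNpos : (0 : ℝ) < (N : ℝ) := by exact_mod_cast (by omega : 0 < N)
  have hN1 : (1 : ℝ) ≤ (N : ℝ) := by exact_mod_cast (by omega : 1 ≤ N)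
  have hN2pos : (0 : ℝ) < (N : ℝ) ^ 2 := by positivity
  -- U ≥ 0 on the box
  have hUnonneg : ∀ y : ℤ × ℤ, max |y.1| |y.2| ≤ 2 * (N : ℤ) → 0 ≤ U N y := by
    intro y hy
    have hmp := maxPrinciple (2 * (N : ℤ)) (fun z => -(U N z)) ?_ ?_ y hy
    · simpa using hmp
    · intro z hz
      have hlapneg : lap2 (U N) z ≤ 0 := by
        rcases eq_or_ne z.2 (z.1 + 1) with h | h
        · have h2 := hdiag z hz h
          split_ifs at h2 with hd
          · nlinarith
          · nlinarith
        · have h2 := hoff z hz h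
          split_ifs at h2 with hd
          · nlinarith
          · nlinarith
      have : lap2 (fun z => -(U N z)) z = -(lap2 (U N) z) := by unfold lap2; ring
      rw [this]; linarith
    · intro z hz
      simp [hzero z hz]
  -- the supersolution
  set b : ℝ := 1 / (2 * (N : ℝ) ^ 2) with hbdef
  have hbpos : 0 < b := by positivity
  set w : ℤ × ℤ → ℝ := fun z => b * (4 * (N : ℝ) + 1) - b * ((|z.2 - z.1 - 1| : ℤ) : ℝ)
    with hwdef
  have hlapw : ∀ y : ℤ × ℤ, lap2 w y = if y.2 = y.1 + 1 then -4 * b else 0 := by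
    intro y
    have := lap2_tent (b * (4 * (N : ℝ) + 1)) b y
    rw [← this]
  -- U ≤ w on the box
  have hUle : ∀ y : ℤ × ℤ, max |y.1| |y.2| ≤ 2 * (N : ℤ) → U N y ≤ w y := by
    intro y hy
    have hmp := maxPrinciple (2 * (N : ℤ)) (fun z => U N z - w z) ?_ ?_ y hy
    · simpa using hmp
    · intro z hz
      have hsplit : lap2 (fun z => U N z - w z) z = lap2 (U N) z - lap2 w z := by
        unfold lap2; ring
      rw [hsplit, hlapw z]
      rcases eq_or_ne z.2 (z.1 + 1) with h | h
      · rw [if_pos h]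
        have h2 := hdiag z hz h
        split_ifs at h2 with hd
        · have hL : lap2 (U N) z = -2 / (N : ℝ) ^ 2 := by
            rw [eq_div_iff (ne_of_gt hN2pos)]
            linear_combination 2 * h2
          rw [hL]
          have e : (-2) / (N : ℝ) ^ 2 - (-4 * b) = 0 := by
            rw [hbdef]; field_simp; ring
          linarith
        · have hL : lap2 (U N) z = 0 :=
            (mul_eq_zero.mp h2).resolve_left (by positivity)
          rw [hL]
          linarith
      · rw [if_neg h]
        have h2 := hoff z hz h
        have hdneg : ¬ memD N z := fun hd => h hd.1
        rw [if_neg hdneg] at h2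
        have hL : lap2 (U N) z = 0 := by
          have hne : (N : ℝ) ^ 2 ≠ 0 := ne_of_gt hN2pos
          exact (mul_eq_zero.mp h2).resolve_left hne
        rw [hL]; norm_num
    · intro z hz
      have h1 : |z.1| ≤ 2 * (N : ℤ) := hz ▸ le_max_left _ _
      have h2 : |z.2| ≤ 2 * (N : ℤ) := hz ▸ le_max_right _ _
      rw [abs_le] at h1 h2
      have habs : |z.2 - z.1 - 1| ≤ 4 * (N : ℤ) + 1 := by
        rw [abs_le]; omega
      have habsR : ((|z.2 - z.1 - 1| : ℤ) : ℝ) ≤ 4 * (N : ℝ) + 1 := by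
        exact_mod_cast habs
      have hU0 := hzero z hz
      simp only [hU0, hwdef]
      nlinarith
  -- membership of x in the box
  obtain ⟨hx1, hx2, hx3, hx4⟩ := hxB
  have hnhat0 : 0 ≤ nhat N := Int.floor_nonneg.mpr (Real.rpow_nonneg hNpos.le _)
  have hnhatN : nhat N ≤ (N : ℤ) := by
    have h34 : (N : ℝ) ^ ((3 : ℝ) / 4) ≤ (N : ℝ) := by
      calc (N : ℝ) ^ ((3 : ℝ) / 4) ≤ (N : ℝ) ^ (1 : ℝ) :=
            Real.rpow_le_rpow_of_exponent_le hN1 (by norm_num)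
        _ = (N : ℝ) := Real.rpow_one _
    calc nhat N ≤ ⌊(N : ℝ)⌋ := Int.floor_le_floor h34
      _ = (N : ℤ) := by rw [Int.floor_natCast]
  have hx1' : x.1 < (N : ℤ) := by
    rcases max_cases (nhat N) (x.2 - 1) with ⟨he, _⟩ | ⟨he, _⟩ <;> rw [he] at hx2 <;> omega
  have hxbox : max |x.1| |x.2| ≤ 2 * (N : ℤ) := by
    rw [max_le_iff, abs_le, abs_le]; omega
  -- final estimate
  have h0 : 0 ≤ U N x := hUnonneg x hxbox
  have hwle : w x ≤ 3 / (N : ℝ) := by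
    have habs0 : (0 : ℝ) ≤ ((|x.2 - x.1 - 1| : ℤ) : ℝ) := by positivity
    have : w x ≤ b * (4 * (N : ℝ) + 1) := by simp only [hwdef]; nlinarith
    calc w x ≤ b * (4 * (N : ℝ) + 1) := this
      _ ≤ 3 / (N : ℝ) := by
        rw [hbdef,
          show (1 : ℝ) / (2 * (N : ℝ) ^ 2) * (4 * (N : ℝ) + 1)
              = (4 * (N : ℝ) + 1) / (2 * (N : ℝ) ^ 2) by ring,
          div_le_div_iff₀ (by positivity) hNpos]
        nlinarith
  have hUx : U N x ≤ 3 / (N : ℝ) := le_trans (hUle x hxbox) hwle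
  have hpow : (N : ℝ) ^ ((1 : ℝ) - c) = (N : ℝ) / (N : ℝ) ^ c := by
    rw [Real.rpow_sub hNpos, Real.rpow_one]
  have hpowpos : (0 : ℝ) < (N : ℝ) ^ c := Real.rpow_pos_of_pos hNpos c
  have hmain : (N : ℝ) ^ ((1 : ℝ) - c) * U N x ≤ 3 / (N : ℝ) ^ c := by
    rw [hpow]
    calc (N : ℝ) / (N : ℝ) ^ c * U N x ≤ (N : ℝ) / (N : ℝ) ^ c * (3 / (N : ℝ)) := by
          apply mul_le_mul_of_nonneg_left hUx (by positivity)
      _ = 3 / (N : ℝ) ^ c := by field_simp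
  have hfin : 3 / (N : ℝ) ^ c ≤ ε := by
    rw [div_le_iff₀ hpowpos]
    have := hN₁ N hNge1
    rw [div_le_iff₀ hε] at this
    linarith [mul_comm ε ((N : ℝ) ^ c)]
  rw [abs_of_nonneg (mul_nonneg (Real.rpow_nonneg hNpos.le _) h0)]
  exact le_trans hmain hfin

end BoundaryDriven
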